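/- Let A > 0 and let 0 < S₀ ≤ S₁ ≤ A. Then ∫_{S₀}^{S₁} dr / (r·log(e + A/r)) ≥ (1/log(e+1))·log( (1 − log(S₀/A)) / (1 − log(S₁/A)) ). -/

import Mathlib

open Real

/-- Key pointwise inequality: for t ≥ 1, log(e+t) ≤ log(e+1)·(1+log t). -/
lemma log_add_le_aux {t : ℝ} (ht : 1 ≤ t) :
    Real.log (Real.exp 1 + t) ≤ Real.log (Real.exp 1 + 1) * (1 + Real.log t) := by
  have htpos : 0 < t := lt_of_lt_of_le one_pos ht
  have he : (0:ℝ) < Real.exp 1 := Real.exp_pos 1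
  have hL1 : 1 ≤ Real.log (Real.exp 1 + 1) := by
    calc (1:ℝ) = Real.log (Real.exp 1) := (Real.log_exp 1).symm
    _ ≤ Real.log (Real.exp 1 + 1) := Real.log_le_log he (by linarith)
  have hlogt : 0 ≤ Real.log t := Real.log_nonneg ht
  have h1 : Real.exp 1 + t ≤ (Real.exp 1 + 1) * t := by nlinarith
  have h2 : Real.log (Real.exp 1 + t) ≤ Real.log ((Real.exp 1 + 1) * t) :=
    Real.log_le_log (by linarith) h1
  rw [Real.log_mul (by positivity) (ne_of_gt htpos)] at h2
  nlinarith

/-- Lower bound on the Osgood integral: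
∫_{S₀}^{S₁} dr/(r·log(e + A/r)) ≥ (1/log(e+1))·log((1 − log(S₀/A))/(1 − log(S₁/A))). -/
theorem stmt_11 (A S₀ S₁ : ℝ) (hA : 0 < A) (h0 : 0 < S₀) (h01 : S₀ ≤ S₁) (h1A : S₁ ≤ A) :
    (1 / Real.log (Real.exp 1 + 1)) *
        Real.log ((1 - Real.log (S₀ / A)) / (1 - Real.log (S₁ / A)))
      ≤ ∫ r in S₀..S₁, 1 / (r * Real.log (Real.exp 1 + A / r)) := by
  set L := Real.log (Real.exp 1 + 1) with hLdef
  have he : (0:ℝ) < Real.exp 1 := Real.exp_pos 1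
  have hL1 : 1 ≤ L := by
    calc (1:ℝ) = Real.log (Real.exp 1) := (Real.log_exp 1).symm
    _ ≤ L := Real.log_le_log he (by linarith)
  have hLpos : 0 < L := lt_of_lt_of_le one_pos hL1
  -- basic facts for points in [S₀, S₁]
  have hfacts : ∀ x ∈ Set.Icc S₀ S₁, 0 < x ∧ x ≤ A ∧ 1 ≤ 1 - Real.log (x / A) := by
    intro x hx
    have hx0 : 0 < x := lt_of_lt_of_le h0 hx.1
    have hxA : x ≤ A := le_trans hx.2 h1A
    have : Real.log (x / A) ≤ 0 :=
      Real.log_nonpos (by positivity) ((div_le_one hA).mpr hxA)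
    exact ⟨hx0, hxA, by linarith⟩
  -- the comparison function and its antiderivative
  set f : ℝ → ℝ := fun r => (1 / L) * (1 / (r * (1 - Real.log (r / A)))) with hfdef
  set F : ℝ → ℝ := fun r => (1 / L) * (-Real.log (1 - Real.log (r / A))) with hFdef
  have hderiv : ∀ x ∈ Set.uIcc S₀ S₁, HasDerivAt F (f x) x := by
    intro x hx
    rw [Set.uIcc_of_le h01] at hx
    obtain ⟨hx0, hxA, hu1⟩ := hfacts x hx
    have hune : (1 - Real.log (x / A)) ≠ 0 := by linarith
    have h1 : HasDerivAt (fun r : ℝ => r / A) (1 / A) x := by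
      simpa using (hasDerivAt_id x).div_const A
    have h2 : HasDerivAt (fun r : ℝ => Real.log (r / A)) (1 / x) x := by
      have := h1.log (by positivity)
      convert this using 1
      field_simp
    have h3 : HasDerivAt (fun r : ℝ => 1 - Real.log (r / A)) (-(1 / x)) x := by
      exact ((hasDerivAt_const x (1:ℝ)).sub h2).congr_deriv (by ring)
    have h4 : HasDerivAt (fun r : ℝ => Real.log (1 - Real.log (r / A)))
        (-(1 / x) / (1 - Real.log (x / A))) x := h3.log hune
    have h5 : HasDerivAt F ((1 / L) * -(-(1 / x) / (1 - Real.log (x / A)))) x :=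
      (h4.neg).const_mul (1 / L)
    convert h5 using 1
    show (1 / L) * (1 / (x * (1 - Real.log (x / A)))) = _
    field_simp
  have hfint : IntervalIntegrable f MeasureTheory.volume S₀ S₁ := by
    apply ContinuousOn.intervalIntegrable
    rw [Set.uIcc_of_le h01]
    apply ContinuousOn.mul continuousOn_const
    apply ContinuousOn.div continuousOn_const
    · apply ContinuousOn.mul continuousOn_id
      apply continuousOn_const.sub
      apply ContinuousOn.log
      · exact continuousOn_id.div_const A
      · intro x hx
        exact ne_of_gt (by have := (hfacts x hx).1; positivity)
    · intro x hx
      obtain ⟨hx0, _, hu1⟩ := hfacts x hx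
      exact ne_of_gt (by nlinarith)
  set g : ℝ → ℝ := fun r => 1 / (r * Real.log (Real.exp 1 + A / r)) with hgdef
  have hglog : ∀ x ∈ Set.Icc S₀ S₁, 0 < Real.log (Real.exp 1 + A / x) := by
    intro x hx
    obtain ⟨hx0, _, _⟩ := hfacts x hx
    have : (1:ℝ) < Real.exp 1 + A / x := by
      have : 0 < A / x := by positivity
      nlinarith [Real.exp_one_gt_d9]
    exact Real.log_pos this
  have hgint : IntervalIntegrable g MeasureTheory.volume S₀ S₁ := by
    apply ContinuousOn.intervalIntegrable
    rw [Set.uIcc_of_le h01]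
    apply ContinuousOn.div continuousOn_const
    · apply ContinuousOn.mul continuousOn_id
      apply ContinuousOn.log
      · exact continuousOn_const.add (continuousOn_const.div continuousOn_id
          (fun x hx => ne_of_gt (hfacts x hx).1))
      · intro x hx
        have h1 := hglog x hx
        have : (0:ℝ) < Real.exp 1 + A / x := by
          have := (hfacts x hx).1; positivity
        exact ne_of_gt this
    · intro x hx
      obtain ⟨hx0, _, _⟩ := hfacts x hx
      exact ne_of_gt (mul_pos hx0 (hglog x hx))
  have hle : ∀ x ∈ Set.Icc S₀ S₁, f x ≤ g x := by
    intro x hx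
    obtain ⟨hx0, hxA, hu1⟩ := hfacts x hx
    have ht1 : 1 ≤ A / x := (one_le_div hx0).mpr hxA
    have hkey := log_add_le_aux ht1
    have hlogeq : Real.log (x / A) = -Real.log (A / x) := by
      rw [← Real.log_inv]
      congr 1
      field_simp
    have hglx := hglog x hx
    have hgx0 : 0 < x * Real.log (Real.exp 1 + A / x) := mul_pos hx0 hglx
    have hdenle : x * Real.log (Real.exp 1 + A / x) ≤ x * (1 - Real.log (x / A)) * L := by
      rw [hlogeq]
      nlinarith
    simp only [hfdef, hgdef]
    rw [one_div_mul_eq_div, div_div]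
    exact div_le_div_of_nonneg_left one_pos.le hgx0 hdenle
  have heq : ∫ r in S₀..S₁, f r = F S₁ - F S₀ :=
    intervalIntegral.integral_eq_sub_of_hasDerivAt hderiv hfint
  have hmono : ∫ r in S₀..S₁, f r ≤ ∫ r in S₀..S₁, g r :=
    intervalIntegral.integral_mono_on h01 hfint hgint hle
  have hFval : F S₁ - F S₀ = (1 / L) *
      Real.log ((1 - Real.log (S₀ / A)) / (1 - Real.log (S₁ / A))) := by
    obtain ⟨_, _, hu0⟩ := hfacts S₀ ⟨le_refl _, h01⟩
    obtain ⟨_, _, hu1'⟩ := hfacts S₁ ⟨h01, le_refl _⟩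
    rw [Real.log_div (by linarith) (by linarith)]
    simp only [hFdef]
    ring
  calc (1 / L) * Real.log ((1 - Real.log (S₀ / A)) / (1 - Real.log (S₁ / A)))
      = F S₁ - F S₀ := hFval.symm
    _ = ∫ r in S₀..S₁, f r := heq.symm
    _ ≤ ∫ r in S₀..S₁, g r := hmono
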